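/- Let φ, φ' : 𝕋² → 𝕋² be Lebesgue-measure-preserving measurable maps, let ξ₀ ∈ L^∞(𝕋²), and let K be the Biot–Savart kernel. Then ∫_{𝕋²} | ∫_{𝕋²} (K(φ(x) - φ(y)) - K(φ(x) - φ'(y))) ξ₀(y) dy | dx ≤ C ‖ξ₀‖_{L^∞} γ( ∫_{𝕋²} |φ(y) - φ'(y)| dy ), where C is the constant from the log-Lipschitz estimate for K and γ is the concave Osgood modulus. -/

import Mathlib

open MeasureTheory

/-- The concave Osgood modulus `γ`. -/
noncomputable def gam (r : ℝ) : ℝ :=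
  if r ≤ 0 then 0
  else if r < (Real.exp 1)⁻¹ then r * (1 - Real.log r)
  else r + (Real.exp 1)⁻¹

/-- The flat two-dimensional torus `𝕋² = ℝ²/ℤ²`. -/
abbrev T2 : Type := AddCircle (1 : ℝ) × AddCircle (1 : ℝ)

instance : IsProbabilityMeasure (volume : Measure (AddCircle (1 : ℝ))) :=
  ⟨by simp [AddCircle.measure_univ (1 : ℝ)]⟩

instance : (volume : Measure T2).IsAddRightInvariant := by
  rw [show (volume : Measure T2)
      = (volume : Measure (AddCircle (1 : ℝ))).prod volume from rfl]
  infer_instance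

instance : (volume : Measure T2).IsAddLeftInvariant := by
  rw [show (volume : Measure T2)
      = (volume : Measure (AddCircle (1 : ℝ))).prod volume from rfl]
  infer_instance

/-- Slope of the tangent line to `gam` at `a`. -/
noncomputable def dgam (a : ℝ) : ℝ :=
  if a < (Real.exp 1)⁻¹ then -Real.log a else 1

lemma gam_zero : gam 0 = 0 := by simp [gam]

lemma neg_mul_log_le {r : ℝ} (hr : 0 < r) : r * (1 - Real.log r) ≤ r + (Real.exp 1)⁻¹ := by
  have hE : (0:ℝ) < Real.exp 1 := Real.exp_pos 1
  have h1 : Real.log (r⁻¹ * (Real.exp 1)⁻¹) ≤ r⁻¹ * (Real.exp 1)⁻¹ - 1 :=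
    Real.log_le_sub_one_of_pos (by positivity)
  rw [Real.log_mul (by positivity) (by positivity), Real.log_inv, Real.log_inv,
    Real.log_exp] at h1
  have h2 : r * (-Real.log r - 1) ≤ r * (r⁻¹ * (Real.exp 1)⁻¹ - 1) :=
    mul_le_mul_of_nonneg_left h1 hr.le
  have h3 : r * (r⁻¹ * (Real.exp 1)⁻¹) = (Real.exp 1)⁻¹ := by
    field_simp
  nlinarith [h2, h3]

lemma gam_nonneg (r : ℝ) : 0 ≤ gam r := by
  have hE : (0:ℝ) < Real.exp 1 := Real.exp_pos 1
  have hE1 : (1:ℝ) ≤ Real.exp 1 := by nlinarith [Real.add_one_le_exp (1:ℝ)]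
  unfold gam
  split_ifs with h1 h2
  · exact le_rfl
  · push_neg at h1
    have hEE : (Real.exp 1)⁻¹ * Real.exp 1 = 1 := inv_mul_cancel₀ (ne_of_gt hE)
    have hEle : (Real.exp 1)⁻¹ ≤ Real.exp 1 := by
      nlinarith [mul_nonneg (by positivity : (0:ℝ) ≤ (Real.exp 1)⁻¹) (sub_nonneg.2 hE1)]
    have hrE : r < Real.exp 1 := lt_of_lt_of_le h2 hEle
    have hlog : Real.log r < 1 := by
      have := Real.log_lt_log h1 hrE
      rwa [Real.log_exp] at this
    nlinarith
  · push_neg at h1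
    positivity

lemma gam_le_linear {r : ℝ} (hr : 0 ≤ r) : gam r ≤ r + (Real.exp 1)⁻¹ := by
  have hE : (0:ℝ) < (Real.exp 1)⁻¹ := by positivity
  unfold gam
  split_ifs with h1 h2
  · linarith
  · exact neg_mul_log_le (lt_of_not_ge h1)
  · exact le_rfl

lemma gam_measurable : Measurable gam := by
  unfold gam
  exact Measurable.ite (measurableSet_le measurable_id measurable_const) measurable_const
    (Measurable.ite (measurableSet_lt measurable_id measurable_const)
      (measurable_id.mul (measurable_const.sub Real.measurable_log))
      (measurable_id.add measurable_const))

/-- The tangent line at `a > 0` majorizes `gam` on `[0, ∞)`. -/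
lemma gam_tangent {a : ℝ} (ha : 0 < a) {r : ℝ} (hr : 0 ≤ r) :
    gam r ≤ gam a + dgam a * (r - a) := by
  have hE : (0:ℝ) < Real.exp 1 := Real.exp_pos 1
  have hEinv : (0:ℝ) < (Real.exp 1)⁻¹ := by positivity
  have hEE : (Real.exp 1)⁻¹ * Real.exp 1 = 1 := inv_mul_cancel₀ (ne_of_gt hE)
  unfold gam dgam
  rw [if_neg (not_le.2 ha)]
  rcases lt_or_ge a (Real.exp 1)⁻¹ with haE | haE
  · rw [if_pos haE, if_pos haE]
    have hla : Real.log a < 0 := by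
      have h := Real.log_lt_log ha haE
      rw [Real.log_inv, Real.log_exp] at h
      linarith
    rcases le_or_gt r 0 with hr0 | hr0
    · have hr0' : r = 0 := le_antisymm hr0 hr
      rw [if_pos hr0, hr0']
      nlinarith
    · rw [if_neg (not_le.2 hr0)]
      rcases lt_or_ge r (Real.exp 1)⁻¹ with hrE | hrE
      · rw [if_pos hrE]
        have h := Real.log_le_sub_one_of_pos (show (0:ℝ) < a / r by positivity)
        rw [Real.log_div (ne_of_gt ha) (ne_of_gt hr0)] at h
        have h2 : r * (Real.log a - Real.log r) ≤ r * (a / r - 1) :=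
          mul_le_mul_of_nonneg_left h hr0.le
        have h3 : r * (a / r) = a := by field_simp
        nlinarith
      · rw [if_neg (not_lt.2 hrE)]
        have h1 : Real.log (a * Real.exp 1) ≤ a * Real.exp 1 - 1 :=
          Real.log_le_sub_one_of_pos (by positivity)
        rw [Real.log_mul (ne_of_gt ha) (ne_of_gt hE), Real.log_exp] at h1
        have h2 : 0 ≤ 1 - a * Real.exp 1 := by
          have h := mul_le_mul_of_nonneg_right haE.le hE.le
          rw [hEE] at h
          linarith
        have h3 : 0 ≤ (r - (Real.exp 1)⁻¹) * (1 - a * Real.exp 1) :=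
          mul_nonneg (by linarith) h2
        have h4 : r * (2 - a * Real.exp 1) ≤ r * (-Real.log a) :=
          mul_le_mul_of_nonneg_left (by linarith) (by linarith)
        nlinarith [h3, h4, hEE]
  · rw [if_neg (not_lt.2 haE), if_neg (not_lt.2 haE)]
    rcases le_or_gt r 0 with hr0 | hr0
    · have hr0' : r = 0 := le_antisymm hr0 hr
      rw [if_pos hr0, hr0']
      linarith
    · rw [if_neg (not_le.2 hr0)]
      rcases lt_or_ge r (Real.exp 1)⁻¹ with hrE | hrE
      · rw [if_pos hrE]
        have h := neg_mul_log_le hr0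
        linarith
      · rw [if_neg (not_lt.2 hrE)]
        linarith

/-- Jensen's inequality for the concave modulus `gam` on a probability space. -/
lemma integral_gam_le {α : Type*} [MeasurableSpace α] {μ : Measure α}
    [IsProbabilityMeasure μ] {f : α → ℝ} (hf : Integrable f μ)
    (h0 : ∀ x, 0 ≤ f x) (hgi : Integrable (fun x => gam (f x)) μ) :
    ∫ x, gam (f x) ∂μ ≤ gam (∫ x, f x ∂μ) := by
  set a := ∫ x, f x ∂μ with ha
  have ha0 : 0 ≤ a := integral_nonneg h0
  rcases eq_or_lt_of_le ha0 with h | h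
  · have hf0 : f =ᵐ[μ] 0 := (integral_eq_zero_iff_of_nonneg h0 hf).1 h.symm
    have hg0 : (fun x => gam (f x)) =ᵐ[μ] 0 := by
      filter_upwards [hf0] with x hx
      simp only [Pi.zero_apply] at hx
      simp [hx, gam_zero]
    rw [integral_congr_ae hg0]
    simp [← h, gam_zero]
  · have hi2 : Integrable (fun x => dgam a * (f x - a)) μ := by
      have h' := (hf.sub (integrable_const a)).const_mul (dgam a)
      simpa using h'
    have haff : Integrable (fun x => gam a + dgam a * (f x - a)) μ :=
      (integrable_const _).add hi2
    calc ∫ x, gam (f x) ∂μ ≤ ∫ x, (gam a + dgam a * (f x - a)) ∂μ :=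
          integral_mono hgi haff fun x => gam_tangent h (h0 x)
      _ = gam a := by
          rw [integral_add (integrable_const _) hi2, integral_const, integral_const_mul,
            integral_sub hf (integrable_const _), integral_const]
          simp [← ha]

/-- If `φ, φ'` are measure-preserving maps of `𝕋²`, `ξ₀ ∈ L^∞(𝕋²)` and `K` is the
Biot–Savart kernel (satisfying the log-Lipschitz estimate with constant `C` and
Osgood modulus `γ`), then
`∫ |∫ (K(φ(x)-φ(y)) - K(φ(x)-φ'(y))) ξ₀(y) dy| dx ≤ C ‖ξ₀‖_∞ γ(∫ |φ(y)-φ'(y)| dy)`. -/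
theorem kernel_difference_estimate (K : T2 → ℝ × ℝ) (hKint : Integrable K)
    (C : ℝ) (hC : 0 < C)
    (hK : ∀ x x' : T2, ∫ y : T2, ‖K (x - y) - K (x' - y)‖ ≤ C * gam (dist x x'))
    (ξ₀ : T2 → ℝ) (hξmeas : Measurable ξ₀) (M : ℝ) (hM : ∀ y, |ξ₀ y| ≤ M)
    (φ φ' : T2 → T2)
    (hφ : MeasurePreserving φ (volume : Measure T2) volume)
    (hφ' : MeasurePreserving φ' (volume : Measure T2) volume) :
    ∫ x : T2, ‖∫ y : T2, ξ₀ y • (K (φ x - φ y) - K (φ x - φ' y))‖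
      ≤ C * M * gam (∫ y : T2, dist (φ y) (φ' y)) := by
  classical
  have hM0 : 0 ≤ M := le_trans (abs_nonneg _) (hM 0)
  have hKsm : AEStronglyMeasurable K (volume : Measure T2) := hKint.aestronglyMeasurable
  -- measure-preserving machinery on the product
  have hfst : MeasurePreserving (Prod.fst : T2 × T2 → T2)
      ((volume : Measure T2).prod volume) volume := by
    refine ⟨measurable_fst, ?_⟩
    rw [Measure.map_fst_prod]
    simp
  have hsubpair : MeasurePreserving (fun z : T2 × T2 => (z.1 - z.2, z.2))
      ((volume : Measure T2).prod volume) ((volume : Measure T2).prod volume) :=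
    measurePreserving_sub_prod _ _
  have hsub : MeasurePreserving (fun p : T2 × T2 => p.1 - p.2)
      ((volume : Measure T2).prod volume) volume := hfst.comp hsubpair
  have hmp : ∀ ψ ψ' : T2 → T2, MeasurePreserving ψ (volume : Measure T2) volume →
      MeasurePreserving ψ' (volume : Measure T2) volume →
      MeasurePreserving (fun p : T2 × T2 => ψ p.1 - ψ' p.2)
        ((volume : Measure T2).prod volume) volume := fun ψ ψ' h h' =>
    hsub.comp (h.prod h')
  set D : T2 → T2 → ℝ × ℝ := fun x y => K (φ x - φ y) - K (φ x - φ' y) with hDdef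
  have hDint : Integrable (fun p : T2 × T2 => D p.1 p.2)
      ((volume : Measure T2).prod volume) := by
    have h1 : Integrable (fun p : T2 × T2 => K (φ p.1 - φ p.2))
        ((volume : Measure T2).prod volume) :=
      ((hmp φ φ hφ hφ).integrable_comp hKsm).2 hKint
    have h2 : Integrable (fun p : T2 × T2 => K (φ p.1 - φ' p.2))
        ((volume : Measure T2).prod volume) :=
      ((hmp φ φ' hφ hφ').integrable_comp hKsm).2 hKint
    exact h1.sub h2
  -- Step A: the key estimate for fixed targets b, b'
  have hneg : MeasurePreserving (fun z : T2 => -z) (volume : Measure T2) volume := by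
    have h := (Measure.measurePreserving_neg (volume : Measure (AddCircle (1 : ℝ)))).prod
      (Measure.measurePreserving_neg (volume : Measure (AddCircle (1 : ℝ))))
    exact h
  have stepA : ∀ b b' : T2,
      ∫ x : T2, ‖K (φ x - b) - K (φ x - b')‖ ≤ C * gam (dist b b') := by
    intro b b'
    have hsmc : ∀ c : T2, AEStronglyMeasurable (fun z : T2 => K (z - c)) volume := fun c =>
      hKsm.comp_measurePreserving (measurePreserving_sub_right volume c)
    have hnorm_sm : AEStronglyMeasurable (fun z : T2 => ‖K (z - b) - K (z - b')‖) volume :=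
      ((hsmc b).sub (hsmc b')).norm
    have e1 : ∫ z : T2, ‖K (z - b) - K (z - b')‖ ∂(Measure.map φ volume)
        = ∫ x : T2, ‖K (φ x - b) - K (φ x - b')‖ :=
      integral_map hφ.measurable.aemeasurable (by rw [hφ.map_eq]; exact hnorm_sm)
    rw [hφ.map_eq] at e1
    have hsm2 : AEStronglyMeasurable (fun z : T2 => ‖K (-b - z) - K (-b' - z)‖) volume := by
      have hmpb : ∀ c : T2, MeasurePreserving (fun z : T2 => c - z)
          (volume : Measure T2) volume := by
        intro c
        have h := (measurePreserving_add_left (volume : Measure T2) c).comp hneg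
        have he : (fun z : T2 => c - z) = (fun w : T2 => c + w) ∘ (fun z : T2 => -z) := by
          funext z
          simp [sub_eq_add_neg, Function.comp]
        rw [he]
        exact h
      exact ((hKsm.comp_measurePreserving (hmpb (-b))).sub
        (hKsm.comp_measurePreserving (hmpb (-b')))).norm
    have e2 : ∫ z : T2, ‖K (-b - z) - K (-b' - z)‖ ∂(Measure.map (fun z : T2 => -z) volume)
        = ∫ x : T2, ‖K (-b - -x) - K (-b' - -x)‖ :=
      integral_map hneg.measurable.aemeasurable (by rw [hneg.map_eq]; exact hsm2)
    rw [hneg.map_eq] at e2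
    have e3 : (fun x : T2 => ‖K (-b - -x) - K (-b' - -x)‖)
        = fun x : T2 => ‖K (x - b) - K (x - b')‖ := by
      funext x
      have hb : -b - -x = x - b := by abel
      have hb' : -b' - -x = x - b' := by abel
      rw [hb, hb']
    rw [e3] at e2
    have hdnn : dist (-b) (-b') = dist b b' := by
      rw [dist_eq_norm, dist_eq_norm, neg_sub_neg, norm_sub_rev]
    calc ∫ x : T2, ‖K (φ x - b) - K (φ x - b')‖
        = ∫ z : T2, ‖K (z - b) - K (z - b')‖ := e1.symm
      _ = ∫ z : T2, ‖K (-b - z) - K (-b' - z)‖ := by rw [e2]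
      _ ≤ C * gam (dist (-b) (-b')) := hK (-b) (-b')
      _ = C * gam (dist b b') := by rw [hdnn]
  -- boundedness of the distance function
  obtain ⟨R, hR⟩ := (isCompact_univ : IsCompact (Set.univ : Set T2)).isBounded.subset_closedBall
    (0 : T2)
  have hdistR : ∀ z w : T2, dist z w ≤ 2 * R := by
    intro z w
    have hz := hR (Set.mem_univ z)
    have hw := hR (Set.mem_univ w)
    rw [Metric.mem_closedBall] at hz hw
    calc dist z w ≤ dist z 0 + dist 0 w := dist_triangle _ _ _
      _ ≤ R + R := add_le_add hz (by rw [dist_comm]; exact hw)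
      _ = 2 * R := by ring
  have hdist_meas : Measurable (fun y : T2 => dist (φ y) (φ' y)) :=
    hφ.measurable.dist hφ'.measurable
  have hdist_int : Integrable (fun y : T2 => dist (φ y) (φ' y)) volume :=
    (integrable_const (2 * R)).mono' hdist_meas.aestronglyMeasurable
      (Filter.Eventually.of_forall fun y => by
        rw [Real.norm_eq_abs, abs_of_nonneg dist_nonneg]
        exact hdistR _ _)
  have hgam_int : Integrable (fun y : T2 => gam (dist (φ y) (φ' y))) volume := by
    refine (hdist_int.add (integrable_const ((Real.exp 1)⁻¹))).mono'
      ((gam_measurable.comp hdist_meas).aestronglyMeasurable) ?_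
    filter_upwards with y
    rw [Real.norm_eq_abs, abs_of_nonneg (gam_nonneg _)]
    exact gam_le_linear dist_nonneg
  -- the main chain of inequalities
  have hDnorm : Integrable (fun p : T2 × T2 => ‖D p.1 p.2‖)
      ((volume : Measure T2).prod volume) := hDint.norm
  have hInner : Integrable (fun x : T2 => ∫ y : T2, ‖D x y‖) volume :=
    hDint.integral_norm_prod_left
  have hae : ∀ᵐ x ∂(volume : Measure T2),
      ‖∫ y : T2, ξ₀ y • D x y‖ ≤ M * ∫ y : T2, ‖D x y‖ := by
    filter_upwards [hDint.prod_right_ae] with x hx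
    calc ‖∫ y : T2, ξ₀ y • D x y‖ ≤ ∫ y : T2, ‖ξ₀ y • D x y‖ :=
          norm_integral_le_integral_norm _
      _ ≤ ∫ y : T2, M * ‖D x y‖ := by
          refine integral_mono_of_nonneg
            (Filter.Eventually.of_forall fun y => norm_nonneg _)
            (hx.norm.const_mul M) ?_
          filter_upwards with y
          rw [norm_smul, Real.norm_eq_abs]
          exact mul_le_mul_of_nonneg_right (hM y) (norm_nonneg _)
      _ = M * ∫ y : T2, ‖D x y‖ := integral_const_mul M _
  calc ∫ x : T2, ‖∫ y : T2, ξ₀ y • D x y‖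
      ≤ ∫ x : T2, M * ∫ y : T2, ‖D x y‖ :=
        integral_mono_of_nonneg (Filter.Eventually.of_forall fun x => norm_nonneg _)
          (hInner.const_mul M) hae
    _ = M * ∫ x : T2, ∫ y : T2, ‖D x y‖ := integral_const_mul M _
    _ = M * ∫ y : T2, ∫ x : T2, ‖D x y‖ := by
        rw [integral_integral_swap hDnorm]
    _ ≤ M * ∫ y : T2, C * gam (dist (φ y) (φ' y)) := by
        refine mul_le_mul_of_nonneg_left ?_ hM0
        refine integral_mono_of_nonneg
          (Filter.Eventually.of_forall fun y => integral_nonneg fun x => norm_nonneg _)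
          (hgam_int.const_mul C) ?_
        filter_upwards with y
        exact stepA (φ y) (φ' y)
    _ = M * (C * ∫ y : T2, gam (dist (φ y) (φ' y))) := by rw [integral_const_mul]
    _ ≤ M * (C * gam (∫ y : T2, dist (φ y) (φ' y))) := by
        refine mul_le_mul_of_nonneg_left ?_ hM0
        exact mul_le_mul_of_nonneg_left
          (integral_gam_le hdist_int (fun _ => dist_nonneg) hgam_int) hC.le
    _ = C * M * gam (∫ y : T2, dist (φ y) (φ' y)) := by ring
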